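/- (Erdős–Gallai) Every connected graph G on n vertices contains a (simple) path with at least min{2·δ(G)+1, n} vertices. -/

import Mathlib

open SimpleGraph Walk

/-- Split a walk at a dart occurring in it. -/
lemma EG_dart_split {V : Type*} {G : SimpleGraph V} {u v : V} (p : G.Walk u v) :
    ∀ d ∈ p.darts, ∃ (p1 : G.Walk u d.fst) (p2 : G.Walk d.snd v),
      p = p1.append (Walk.cons d.adj p2) := by
  induction p with
  | nil => intro d hd; simp at hd
  | cons h q ih =>
    intro d hd
    rw [Walk.darts_cons, List.mem_cons] at hd
    rcases hd with rfl | hd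
    · exact ⟨Walk.nil, q, rfl⟩
    · obtain ⟨p1, p2, hp⟩ := ih d hd
      exact ⟨Walk.cons h p1, p2, by rw [hp]; rfl⟩

/-- **Erdős–Gallai.** Every connected graph `G` on `n` vertices contains a
(simple) path with at least `min {2·δ(G) + 1, n}` vertices. -/
theorem erdos_gallai_path {V : Type*} [Fintype V] (G : SimpleGraph V) [DecidableRel G.Adj]
    (hconn : G.Connected) :
    ∃ (u v : V) (p : G.Walk u v), p.IsPath ∧
      min (2 * G.minDegree + 1) (Fintype.card V) ≤ p.support.length := by
  classical
  have hV : Nonempty V := hconn.nonempty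
  set N := Fintype.card V with hNdef
  set δ := G.minDegree with hδdef
  let S : Finset ℕ := (Finset.range (N + 1)).filter
    (fun n => ∃ (a b : V) (q : G.Walk a b), q.IsPath ∧ q.support.length = n)
  have hmemS : ∀ (a b : V) (q : G.Walk a b), q.IsPath → q.support.length ∈ S := by
    intro a b q hq
    refine Finset.mem_filter.mpr ⟨?_, a, b, q, hq, rfl⟩
    rw [Finset.mem_range, Walk.length_support]
    exact Nat.succ_lt_succ hq.length_lt
  have hSne : S.Nonempty := by
    obtain ⟨a⟩ := hV
    exact ⟨_, hmemS a a Walk.nil Walk.IsPath.nil⟩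
  set L := S.max' hSne with hLdef
  have hmax : ∀ (a b : V) (q : G.Walk a b), q.IsPath → q.support.length ≤ L :=
    fun a b q hq => S.le_max' _ (hmemS a b q hq)
  obtain ⟨u, v, p, hp, hpL⟩ := (Finset.mem_filter.mp (S.max'_mem hSne)).2
  rw [← hLdef] at hpL
  by_cases hgoal : min (2 * δ + 1) N ≤ L
  · exact ⟨u, v, p, hp, by rw [hpL]; exact hgoal⟩
  exfalso
  push_neg at hgoal
  rw [lt_min_iff] at hgoal
  obtain ⟨hL2d, hLN⟩ := hgoal
  have hL1 : 1 ≤ L := by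
    have h1 := hmax u u Walk.nil Walk.IsPath.nil
    simpa using h1
  have hδ1 : 1 ≤ δ := by omega
  have hlen : p.length + 1 = L := by rw [← hpL, Walk.length_support]
  -- endpoint neighbor closures
  have hclu : ∀ w, G.Adj u w → w ∈ p.support := by
    intro w hw
    by_contra hws
    have h2 : (Walk.cons hw.symm p).IsPath := hp.cons hws
    have h3 := hmax _ _ _ h2
    rw [Walk.support_cons, List.length_cons, hpL] at h3
    omega
  have hclv : ∀ w, G.Adj v w → w ∈ p.support := by
    intro w hw
    by_contra hws
    have hws' : w ∉ p.reverse.support := by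
      rwa [Walk.support_reverse, List.mem_reverse]
    have h2 : (Walk.cons hw.symm p.reverse).IsPath := hp.reverse.cons hws'
    have h3 := hmax _ _ _ h2
    rw [Walk.support_cons, List.length_cons, Walk.support_reverse,
      List.length_reverse, hpL] at h3
    omega
  -- a vertex outside the path
  obtain ⟨x, hx⟩ : ∃ x, x ∉ p.support := by
    by_contra hall
    push_neg at hall
    have h1 : (Finset.univ : Finset V).card ≤ p.support.toFinset.card :=
      Finset.card_le_card fun a _ => List.mem_toFinset.mpr (hall a)
    have h2 := p.support.toFinset_card_le
    rw [Finset.card_univ, ← hNdef] at h1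
    rw [hpL] at h2
    omega
  obtain ⟨d', hd'mem, hd'fst, hd'snd⟩ :=
    ((hconn.preconnected u x).some).exists_boundary_dart {a | a ∈ p.support}
      p.start_mem_support hx
  have hqmem : d'.fst ∈ p.support := hd'fst
  have hxmem : d'.snd ∉ p.support := hd'snd
  rcases Nat.lt_or_ge p.length 2 with hsmall | hbig
  · -- short longest path: length 0 or 1
    cases p with
    | nil =>
      have h1 : 0 < G.degree u := lt_of_lt_of_le (by omega) (G.minDegree_le_degree u)
      rw [← SimpleGraph.card_neighborFinset_eq_degree] at h1
      obtain ⟨w, hw⟩ := Finset.card_pos.mp h1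
      rw [SimpleGraph.mem_neighborFinset] at hw
      have h2 := hclu w hw
      simp only [Walk.support_nil, List.mem_singleton] at h2
      exact G.loopless.irrefl u (h2 ▸ hw)
    | cons h1 q =>
      cases q with
      | nil =>
        have hsnd : d'.snd ∈ (Walk.cons h1 Walk.nil).support := by
          have hfst : d'.fst = u ∨ d'.fst = v := by simpa using hqmem
          rcases hfst with hfu | hfv
          · exact hclu _ (by rw [← hfu]; exact d'.adj)
          · exact hclv _ (by rw [← hfv]; exact d'.adj)
        exact hxmem hsnd
      | cons h2 q' =>
        simp only [Walk.length_cons] at hsmall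
        omega
  -- main case : longest path has length ≥ 2
  · have hdnd : p.darts.Nodup := by
      have he : (p.darts.map SimpleGraph.Dart.edge).Nodup := hp.edges_nodup
      exact he.of_map _
    set D : Finset G.Dart := p.darts.toFinset with hDdef
    have hDcard : D.card = p.length := by
      rw [hDdef, List.toFinset_card_of_nodup hdnd, Walk.length_darts]
    set A : Finset G.Dart := D.filter (fun d => G.Adj u d.snd) with hAdef
    set B : Finset G.Dart := D.filter (fun d => G.Adj v d.fst) with hBdef
    have hAcard : δ ≤ A.card := by
      have hsub : G.neighborFinset u ⊆ A.image (fun d => d.snd) := by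
        intro w hw
        rw [SimpleGraph.mem_neighborFinset] at hw
        have hws : w ∈ p.support.tail := by
          have h1 := hclu w hw
          rw [p.support_eq_cons] at h1
          rcases List.mem_cons.mp h1 with rfl | h2
          · exact (G.loopless.irrefl _ hw).elim
          · exact h2
        rw [← Walk.map_snd_darts] at hws
        obtain ⟨d, hd, rfl⟩ := List.mem_map.mp hws
        exact Finset.mem_image.mpr
          ⟨d, Finset.mem_filter.mpr ⟨List.mem_toFinset.mpr hd, hw⟩, rfl⟩
      calc δ ≤ G.degree u := G.minDegree_le_degree u
        _ ≤ (A.image (fun d => d.snd)).card := Finset.card_le_card hsub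
        _ ≤ A.card := Finset.card_image_le
    have hBcard : δ ≤ B.card := by
      have hsub : G.neighborFinset v ⊆ B.image (fun d => d.fst) := by
        intro w hw
        rw [SimpleGraph.mem_neighborFinset] at hw
        have hws : w ∈ p.support.dropLast := by
          have h1 := hclv w hw
          have h2 : p.support.dropLast ++ [p.support.getLast (by simp)] = p.support :=
            List.dropLast_append_getLast (by simp)
          rw [p.getLast_support] at h2
          rw [← h2, List.mem_append, List.mem_singleton] at h1
          rcases h1 with h1 | rfl
          · exact h1
          · exact (G.loopless.irrefl _ hw).elim
        rw [← Walk.map_fst_darts] at hws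
        obtain ⟨d, hd, rfl⟩ := List.mem_map.mp hws
        exact Finset.mem_image.mpr
          ⟨d, Finset.mem_filter.mpr ⟨List.mem_toFinset.mpr hd, hw⟩, rfl⟩
      calc δ ≤ G.degree v := G.minDegree_le_degree v
        _ ≤ (B.image (fun d => d.fst)).card := Finset.card_le_card hsub
        _ ≤ B.card := Finset.card_image_le
    have hABdisj : ¬ Disjoint A B := by
      intro hdisj
      have h1 : (A ∪ B).card = A.card + B.card := Finset.card_union_of_disjoint hdisj
      have h2 : A ∪ B ⊆ D :=
        Finset.union_subset (Finset.filter_subset _ _) (Finset.filter_subset _ _)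
      have h3 := Finset.card_le_card h2
      omega
    obtain ⟨d, hdA, hdB⟩ := Finset.not_disjoint_iff.mp hABdisj
    rw [hAdef, Finset.mem_filter] at hdA
    rw [hBdef, Finset.mem_filter] at hdB
    obtain ⟨hdD, huz⟩ := hdA
    obtain ⟨-, hvy⟩ := hdB
    have hdmem : d ∈ p.darts := List.mem_toFinset.mp hdD
    obtain ⟨p1, p2, hsplit⟩ := EG_dart_split p d hdmem
    have hp' := hp
    rw [hsplit] at hp'
    have hp1 : p1.IsPath := hp'.of_append_left
    have hp2 : p2.IsPath := ((Walk.cons_isPath_iff _ _).mp hp'.of_append_right).1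
    have hps : p.support = p1.support ++ p2.support := by
      rw [hsplit, Walk.support_append, Walk.support_cons, List.tail_cons]
    have hnd : (p1.support ++ p2.support).Nodup := hps ▸ hp.support_nodup
    have hdisj := List.disjoint_of_nodup_append hnd
    have hpe : p.edges = p1.edges ++ (s(d.fst, d.snd) :: p2.edges) := by
      rw [hsplit, Walk.edges_append, Walk.edges_cons]
    have hend : (p1.edges ++ (s(d.fst, d.snd) :: p2.edges)).Nodup := hpe ▸ hp.edges_nodup
    have hu1 : u ∈ p1.support := p1.start_mem_support
    have hz2 : d.snd ∈ p2.support := p2.start_mem_support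
    have hy1 : d.fst ∈ p1.support := p1.end_mem_support
    have hv2 : v ∈ p2.support := p2.end_mem_support
    have h1 : s(u, d.snd) ∉ p1.edges :=
      fun h => hdisj (p1.snd_mem_support_of_mem_edges h) hz2
    have h2 : s(u, d.snd) ∉ p2.edges :=
      fun h => hdisj hu1 (p2.fst_mem_support_of_mem_edges h)
    have h3 : s(v, d.fst) ∉ p1.edges :=
      fun h => hdisj (p1.fst_mem_support_of_mem_edges h) hv2
    have h4 : s(v, d.fst) ∉ p2.edges :=
      fun h => hdisj hy1 (p2.snd_mem_support_of_mem_edges h)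
    have h5 : s(u, d.snd) ≠ s(v, d.fst) := by
      intro h
      rw [Sym2.eq_iff] at h
      rcases h with ⟨huv, -⟩ | ⟨huy, hzv⟩
      · exact hdisj hu1 (by rw [huv]; exact hv2)
      · subst huy
        subst hzv
        rw [(Walk.isPath_iff_eq_nil (p := p1)).mp hp1, (Walk.isPath_iff_eq_nil (p := p2)).mp hp2]
          at hsplit
        rw [hsplit] at hbig
        simp at hbig
    -- the cycle through all vertices of p
    set c : G.Walk u u :=
      Walk.cons huz (p2.append (Walk.cons hvy p1.reverse)) with hcdef
    have hcsupp : c.support = u :: (p2.support ++ p1.support.reverse) := by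
      rw [hcdef]
      simp [Walk.support_append, Walk.support_reverse]
    have hperm : (p2.support ++ p1.support.reverse).Perm p.support := by
      have h1 : (p2.support ++ p1.support.reverse).Perm (p2.support ++ p1.support) :=
        List.Perm.append_left _ (List.reverse_perm _)
      refine h1.trans (List.perm_append_comm.trans ?_)
      rw [hps]
    have hctrail : c.IsTrail := by
      rw [Walk.isTrail_def]
      have hce : c.edges = s(u, d.snd) :: (p2.edges ++ (s(v, d.fst) :: p1.edges.reverse)) := by
        rw [hcdef]
        simp [Walk.edges_append, Walk.edges_reverse]
      rw [hce]
      have hnd1 : p1.edges.Nodup := hp1.edges_nodup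
      have hnd2 : p2.edges.Nodup := hp2.edges_nodup
      have hedisj : ∀ e ∈ p1.edges, e ∉ p2.edges := by
        intro e he1 he2
        exact (List.disjoint_of_nodup_append hend) he1 (List.mem_cons_of_mem _ he2)
      refine List.nodup_cons.mpr ⟨?_, ?_⟩
      · intro hmem
        rcases List.mem_append.mp hmem with hm | hm
        · exact h2 hm
        · rcases List.mem_cons.mp hm with hm' | hm'
          · exact h5 hm'
          · exact h1 (List.mem_reverse.mp hm')
      · refine List.Nodup.append hnd2 ?_ ?_
        · exact List.nodup_cons.mpr ⟨fun hm => h3 (List.mem_reverse.mp hm), List.nodup_reverse.mpr hnd1⟩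
        · intro e he1 he2
          rcases List.mem_cons.mp he2 with rfl | he2'
          · exact h4 he1
          · exact hedisj e (List.mem_reverse.mp he2') he1
    have hqc : d'.fst ∈ c.support := by
      rw [hcsupp]
      exact List.mem_cons_of_mem _ (hperm.mem_iff.mpr hqmem)
    set c' := c.rotate _ hqc with hc'def
    have hc'trail : c'.IsTrail := hctrail.rotate hqc
    have hc'tail : c'.support.tail.Perm p.support :=
      ((Walk.support_rotate c _ hqc).perm).trans
        (by rw [hcsupp, List.tail_cons]; exact hperm)
    have hc'nil : ¬ c'.Nil := by
      rw [Walk.nil_iff_length_eq]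
      intro h0
      have htl : c'.support.tail.length = p.support.length := hc'tail.length_eq
      rw [hpL, List.length_tail, Walk.length_support] at htl
      omega
    obtain ⟨w, hadj, r, hc'⟩ := Walk.not_nil_iff.mp hc'nil
    have hrsupp : r.support.Perm p.support := by
      have hts : c'.support.tail = r.support := by
        rw [hc', Walk.support_cons, List.tail_cons]
      rw [← hts]
      exact hc'tail
    have hrpath : r.IsPath :=
      Walk.IsPath.mk' ((hrsupp.nodup_iff).mpr hp.support_nodup)
    have hxr : d'.snd ∉ r.reverse.support := by
      rw [Walk.support_reverse, List.mem_reverse]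
      intro hmem
      exact hxmem (hrsupp.mem_iff.mp hmem)
    have hfinal : (Walk.cons d'.adj.symm r.reverse).IsPath := hrpath.reverse.cons hxr
    have hlenfin := hmax _ _ _ hfinal
    rw [Walk.support_cons, List.length_cons, Walk.support_reverse,
      List.length_reverse] at hlenfin
    have hrlen : r.support.length = L := by rw [hrsupp.length_eq, hpL]
    omega
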